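/- Let G be a finite subgroup of Aut(𝔻) (the Möbius transformations of the open unit disk). Then G has a common fixed point α ∈ 𝔻; i.e., there exists α in the open unit disk with ρ(α) = α for every ρ ∈ G. -/

import Mathlib

open Complex Metric

noncomputable def mob (a z : ℂ) : ℂ := (a - z) / (1 - (starRingEnd ℂ) a * z)

lemma keyId (a z : ℂ) : normSq (1 - (starRingEnd ℂ) a * z)
    = normSq (a - z) + (1 - normSq a) * (1 - normSq z) := by
  simp [Complex.normSq_apply, Complex.mul_re, Complex.mul_im, Complex.sub_re, Complex.sub_im]
  ring

lemma den_pos {a z : ℂ} (ha : normSq a < 1) (hz : normSq z < 1) :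
    0 < normSq (1 - (starRingEnd ℂ) a * z) := by
  rw [keyId]
  nlinarith [normSq_nonneg (a - z), normSq_nonneg a, normSq_nonneg z]

lemma den_ne {a z : ℂ} (ha : normSq a < 1) (hz : normSq z < 1) :
    (1 - (starRingEnd ℂ) a * z) ≠ 0 := by
  intro h
  have := den_pos ha hz
  rw [h] at this; simp at this

lemma nsq_mob {a z : ℂ} :
    normSq (mob a z) = normSq (a - z) / normSq (1 - (starRingEnd ℂ) a * z) := by
  rw [mob, normSq_div]

lemma mob_mem {a z : ℂ} (ha : normSq a < 1) (hz : normSq z < 1) :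
    normSq (mob a z) < 1 := by
  rw [nsq_mob]
  rw [div_lt_one (den_pos ha hz), keyId]
  nlinarith [normSq_nonneg (a-z)]

lemma mob_invol {a z : ℂ} (ha : normSq a < 1) (hz : normSq z < 1) :
    mob a (mob a z) = z := by
  have h1 : (1 - (starRingEnd ℂ) a * z) ≠ 0 := den_ne ha hz
  have h2 : (1 : ℂ) - (starRingEnd ℂ) a * a ≠ 0 := den_ne ha ha
  have hnum : a - (a - z)/(1 - (starRingEnd ℂ) a * z)
      = z * (1 - (starRingEnd ℂ) a * a) / (1 - (starRingEnd ℂ) a * z) := by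
    rw [eq_div_iff h1, sub_mul, div_mul_cancel₀ _ h1]; ring
  have hden : 1 - (starRingEnd ℂ) a * ((a - z)/(1 - (starRingEnd ℂ) a * z))
      = (1 - (starRingEnd ℂ) a * a) / (1 - (starRingEnd ℂ) a * z) := by
    field_simp; ring
  rw [mob, mob, hnum, hden, div_div_div_cancel_right₀]
  · exact mul_div_cancel_right₀ z h2
  · exact h1
lemma nsq_lt_one_iff {z : ℂ} : normSq z < 1 ↔ z ∈ ball (0:ℂ) 1 := by
  rw [mem_ball_zero_iff, ← Complex.sq_norm]
  constructor <;> intro h <;> nlinarith [norm_nonneg z]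

lemma mob_diff {a : ℂ} (ha : normSq a < 1) : DifferentiableOn ℂ (mob a) (ball 0 1) := by
  apply DifferentiableOn.div (by fun_prop) (by fun_prop)
  intro z hz
  exact den_ne ha (nsq_lt_one_iff.2 hz)

lemma mob_maps {a : ℂ} (ha : normSq a < 1) :
    Set.MapsTo (mob a) (ball (0:ℂ) 1) (ball (0:ℂ) 1) := fun z hz =>
  nsq_lt_one_iff.1 (mob_mem ha (nsq_lt_one_iff.2 hz))

lemma mob_zero (a : ℂ) : mob a 0 = a := by simp [mob]

lemma mob_self (a : ℂ) : mob a a = 0 := by simp [mob]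

lemma schwarz_pick {f : ℂ → ℂ} (hd : DifferentiableOn ℂ f (ball 0 1))
    (hm : Set.MapsTo f (ball 0 1) (ball 0 1)) {z w : ℂ} (hz : normSq z < 1)
    (hw : normSq w < 1) :
    normSq (f z - f w) * ((1 - normSq z) * (1 - normSq w))
      ≤ normSq (z - w) * ((1 - normSq (f z)) * (1 - normSq (f w))) := by
  have hfz : normSq (f z) < 1 := nsq_lt_one_iff.2 (hm (nsq_lt_one_iff.1 hz))
  have hfw : normSq (f w) < 1 := nsq_lt_one_iff.2 (hm (nsq_lt_one_iff.1 hw))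
  set g : ℂ → ℂ := fun ζ => mob (f w) (f (mob w ζ)) with hg
  have gd : DifferentiableOn ℂ g (ball 0 1) :=
    ((mob_diff hfw).comp (hd.comp (mob_diff hw) (mob_maps hw))
      (hm.comp (mob_maps hw)))
  have gm : Set.MapsTo g (ball (0:ℂ) 1) (ball (0:ℂ) 1) :=
    (mob_maps hfw).comp (hm.comp (mob_maps hw))
  have g0 : g 0 = 0 := by rw [hg]; simp only [mob_zero, mob_self]
  have habs : ‖g (mob w z)‖ ≤ ‖mob w z‖ :=
    Complex.norm_le_norm_of_mapsTo_ball gd (fun x hx => ball_subset_closedBall (gm hx)) g0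
      (mem_ball_zero_iff.1 (nsq_lt_one_iff.1 (mob_mem hw hz)))
  have hgz : g (mob w z) = mob (f w) (f z) := by rw [hg]; simp only [mob_invol hw hz]
  rw [hgz] at habs
  have hsq : normSq (mob (f w) (f z)) ≤ normSq (mob w z) := by
    rw [← Complex.sq_norm, ← Complex.sq_norm]
    exact pow_le_pow_left₀ (norm_nonneg _) habs 2
  rw [nsq_mob, nsq_mob, keyId, keyId] at hsq
  set A := normSq (f w - f z) with hA
  set B := (1 - normSq (f w)) * (1 - normSq (f z)) with hB
  set C := normSq (w - z) with hC
  set D := (1 - normSq w) * (1 - normSq z) with hD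
  have hBpos : 0 < B := by rw [hB]; nlinarith
  have hDpos : 0 < D := by rw [hD]; nlinarith
  have hAnn : 0 ≤ A := normSq_nonneg _
  have hCnn : 0 ≤ C := normSq_nonneg _
  rw [div_le_div_iff₀ (by linarith) (by linarith)] at hsq
  have key : A * D ≤ C * B := by nlinarith
  have e1 : normSq (f z - f w) = A := by rw [hA, ← normSq_neg, neg_sub]
  have e2 : normSq (z - w) = C := by rw [hC, ← normSq_neg, neg_sub]
  rw [e1, e2]
  calc A * ((1 - normSq z) * (1 - normSq w)) = A * D := by rw [hD]; ring
    _ ≤ C * B := key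
    _ = C * ((1 - normSq (f z)) * (1 - normSq (f w))) := by rw [hB]; ring
noncomputable def Dd (a w : ℂ) : ℝ := normSq (w - a) / ((1 - normSq a) * (1 - normSq w))

lemma qol (u v : ℂ) {y₁ y₂ : ℝ} (h1 : 0 < y₁) (h2 : 0 < y₂) :
    normSq (u + v) / (y₁ + y₂) ≤ normSq u / y₁ + normSq v / y₂ := by
  rw [div_add_div _ _ (ne_of_gt h1) (ne_of_gt h2),
    div_le_div_iff₀ (by linarith) (by positivity)]
  simp only [Complex.normSq_apply, Complex.add_re, Complex.add_im]
  nlinarith [sq_nonneg (u.re * y₂ - v.re * y₁), sq_nonneg (u.im * y₂ - v.im * y₁),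
    sq_nonneg (u.re + v.re), sq_nonneg (u.im + v.im)]

lemma nsq_half (z : ℂ) : normSq ((z:ℂ)/2) = normSq z / 4 := by
  rw [normSq_div]
  norm_num [Complex.normSq_apply]

lemma parallelogram (x y : ℂ) :
    normSq ((x + y)/2) = (normSq x + normSq y)/2 - normSq ((x - y)/2) := by
  rw [nsq_half, nsq_half]
  simp only [Complex.normSq_apply, Complex.add_re, Complex.add_im, Complex.sub_re,
    Complex.sub_im]
  ring

lemma u_mid_strict {a w₁ w₂ : ℂ} (h1 : normSq w₁ < 1) (h2 : normSq w₂ < 1)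
    (hne : w₁ ≠ w₂) :
    normSq ((w₁ + w₂)/2 - a) / (1 - normSq ((w₁ + w₂)/2))
      < (normSq (w₁ - a) / (1 - normSq w₁) + normSq (w₂ - a) / (1 - normSq w₂)) / 2 := by
  have hd1 : 0 < 1 - normSq w₁ := by linarith
  have hd2 : 0 < 1 - normSq w₂ := by linarith
  have hdiff : 0 < normSq ((w₁ - w₂)/2) := by
    rw [normSq_pos]
    intro h
    apply hne
    have : w₁ - w₂ = 0 := by
      field_simp at h; simpa using h
    linear_combination this
  have hdm : (1 - normSq w₁ + (1 - normSq w₂))/2 < 1 - normSq ((w₁ + w₂)/2) := by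
    rw [parallelogram]; linarith
  by_cases hN : normSq ((w₁ + w₂)/2 - a) = 0
  · rw [hN, zero_div]
    have : w₁ - a ≠ 0 ∨ w₂ - a ≠ 0 := by
      by_contra h
      push_neg at h
      apply hne
      have e1 : w₁ = a := by linear_combination h.1
      have e2 : w₂ = a := by linear_combination h.2
      rw [e1, e2]
    have t1 : 0 ≤ normSq (w₁ - a) / (1 - normSq w₁) := div_nonneg (normSq_nonneg _) hd1.le
    have t2 : 0 ≤ normSq (w₂ - a) / (1 - normSq w₂) := div_nonneg (normSq_nonneg _) hd2.le
    rcases this with h | h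
    · have hp : 0 < normSq (w₁ - a) / (1 - normSq w₁) := div_pos (normSq_pos.2 h) hd1
      linarith
    · have hp : 0 < normSq (w₂ - a) / (1 - normSq w₂) := div_pos (normSq_pos.2 h) hd2
      linarith
  · have hNpos : 0 < normSq ((w₁ + w₂)/2 - a) := (normSq_nonneg _).lt_of_ne (Ne.symm hN)
    have step1 : normSq ((w₁ + w₂)/2 - a) / (1 - normSq ((w₁ + w₂)/2))
        < normSq ((w₁ + w₂)/2 - a) / ((1 - normSq w₁ + (1 - normSq w₂))/2) :=
      div_lt_div_of_pos_left hNpos (by linarith) hdm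
    have hsum : (w₁ + w₂)/2 - a = (w₁ - a)/2 + (w₂ - a)/2 := by ring
    have step2 : normSq ((w₁ + w₂)/2 - a) / ((1 - normSq w₁ + (1 - normSq w₂))/2)
        ≤ normSq ((w₁ - a)/2) / ((1 - normSq w₁)/2) + normSq ((w₂ - a)/2) / ((1 - normSq w₂)/2) := by
      have := qol ((w₁ - a)/2) ((w₂ - a)/2) (half_pos hd1) (half_pos hd2)
      rw [← hsum] at this
      calc normSq ((w₁ + w₂)/2 - a) / ((1 - normSq w₁ + (1 - normSq w₂))/2)
          = normSq ((w₁ + w₂)/2 - a) / ((1 - normSq w₁)/2 + (1 - normSq w₂)/2) := by ring_nf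
        _ ≤ _ := this
    have heq : normSq ((w₁ - a)/2) / ((1 - normSq w₁)/2) + normSq ((w₂ - a)/2) / ((1 - normSq w₂)/2)
        = (normSq (w₁ - a) / (1 - normSq w₁) + normSq (w₂ - a) / (1 - normSq w₂)) / 2 := by
      rw [nsq_half, nsq_half]
      field_simp
      ring
    linarith

lemma Dd_mid_strict {a w₁ w₂ : ℂ} (ha : normSq a < 1) (h1 : normSq w₁ < 1)
    (h2 : normSq w₂ < 1) (hne : w₁ ≠ w₂) :
    Dd a ((w₁ + w₂)/2) < (Dd a w₁ + Dd a w₂)/2 := by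
  have hap : 0 < 1 - normSq a := by linarith
  have key := u_mid_strict (a := a) h1 h2 hne
  have e : ∀ w : ℂ, Dd a w = (normSq (w - a) / (1 - normSq w)) / (1 - normSq a) := by
    intro w
    rw [Dd, div_div]
    ring_nf
  rw [e, e, e]
  have e2 : (normSq (w₁ - a) / (1 - normSq w₁) / (1 - normSq a)
      + normSq (w₂ - a) / (1 - normSq w₂) / (1 - normSq a)) / 2
      = ((normSq (w₁ - a) / (1 - normSq w₁) + normSq (w₂ - a) / (1 - normSq w₂)) / 2)
        / (1 - normSq a) := by ring
  rw [e2]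
  exact div_lt_div_of_pos_right key hap

lemma Dd_nonneg {a w : ℂ} (ha : normSq a < 1) (hw : normSq w < 1) : 0 ≤ Dd a w := by
  rw [Dd]
  exact div_nonneg (normSq_nonneg _) (by nlinarith)

/-- A finite subgroup of the group of holomorphic automorphisms of the open unit disk has a
common fixed point in the disk. -/
theorem stmt6 (G : Subgroup (Equiv.Perm {z : ℂ // ‖z‖ < 1})) [Finite G]
    (hol : ∀ ρ ∈ G, ∃ F : ℂ → ℂ, DifferentiableOn ℂ F (Metric.ball (0 : ℂ) 1) ∧
      ∀ z : {z : ℂ // ‖z‖ < 1}, F (z : ℂ) = ((ρ z) : ℂ)) :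
    ∃ α : {z : ℂ // ‖z‖ < 1}, ∀ ρ ∈ G, ρ α = α := by
  classical
  have absn : ∀ z : ℂ, ‖z‖ < 1 ↔ normSq z < 1 := by
    intro z
    rw [← Complex.sq_norm]
    constructor <;> intro h <;> nlinarith [norm_nonneg z]
  choose F hFd hFe using hol
  have hFm : ∀ ρ (hρ : ρ ∈ G), Set.MapsTo (F ρ hρ) (ball (0:ℂ) 1) (ball (0:ℂ) 1) := by
    intro ρ hρ x hx
    rw [mem_ball_zero_iff] at hx ⊢
    have h2 := hFe ρ hρ ⟨x, hx⟩
    simp only [Subtype.coe_mk] at h2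
    rw [h2]
    exact (ρ ⟨x, hx⟩).2
  have hcross : ∀ ρ (hρ : ρ ∈ G) (a b : {z : ℂ // ‖z‖ < 1}),
      normSq ((ρ b : ℂ) - (ρ a : ℂ)) * ((1 - normSq (b:ℂ)) * (1 - normSq (a:ℂ)))
        ≤ normSq ((b:ℂ) - (a:ℂ)) * ((1 - normSq (ρ b : ℂ)) * (1 - normSq (ρ a : ℂ))) := by
    intro ρ hρ a b
    have hb := (absn _).1 b.2
    have ha := (absn _).1 a.2
    have H := schwarz_pick (hFd ρ hρ) (hFm ρ hρ) (z := (b:ℂ)) (w := (a:ℂ)) hb ha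
    rw [hFe ρ hρ b, hFe ρ hρ a] at H
    exact H
  have hiso : ∀ ρ (hρ : ρ ∈ G) (a b : {z : ℂ // ‖z‖ < 1}),
      Dd (ρ a : ℂ) (ρ b : ℂ) = Dd (a : ℂ) (b : ℂ) := by
    intro ρ hρ a b
    have h1 := hcross ρ hρ a b
    have h2 := hcross ρ⁻¹ (G.inv_mem hρ) (ρ a) (ρ b)
    rw [Equiv.Perm.inv_def, Equiv.symm_apply_apply, Equiv.symm_apply_apply] at h2
    have ha := (absn _).1 a.2
    have hb := (absn _).1 b.2
    have hra := (absn _).1 (ρ a).2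
    have hrb := (absn _).1 (ρ b).2
    rw [Dd, Dd, div_eq_div_iff (by nlinarith) (by nlinarith)]
    nlinarith [h1, h2]
  haveI : Fintype G := Fintype.ofFinite G
  have h0 : ‖(0:ℂ)‖ < 1 := by simp
  set z0 : {z : ℂ // ‖z‖ < 1} := ⟨0, h0⟩ with hz0
  set E : ℂ → ℝ := fun w => ∑ ρ : G, Dd ((ρ : Equiv.Perm {z : ℂ // ‖z‖ < 1}) z0 : ℂ) w with hE
  have horb : ∀ ρ : G, normSq ((ρ : Equiv.Perm {z : ℂ // ‖z‖ < 1}) z0 : ℂ) < 1 :=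
    fun ρ => (absn _).1 ((ρ : Equiv.Perm {z : ℂ // ‖z‖ < 1}) z0).2
  have hEnn : ∀ w : ℂ, normSq w < 1 → 0 ≤ E w := by
    intro w hw
    exact Finset.sum_nonneg fun ρ _ => Dd_nonneg (horb ρ) hw
  have hn0 : normSq (0:ℂ) < 1 := by simp
  set M : ℝ := E 0 with hM
  have hMnn : 0 ≤ M := hEnn 0 hn0
  have hDd0 : ∀ w : ℂ, Dd 0 w = normSq w / (1 - normSq w) := by
    intro w
    simp [Dd]
  have hEid : ∀ w : ℂ, normSq w < 1 → normSq w / (1 - normSq w) ≤ E w := by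
    intro w hw
    have h1 : Dd (((1:G) : Equiv.Perm {z : ℂ // ‖z‖ < 1}) z0 : ℂ) w = normSq w / (1 - normSq w) := by
      rw [show (((1:G) : Equiv.Perm {z : ℂ // ‖z‖ < 1}) z0 : ℂ) = 0 from by simp [hz0], hDd0]
    calc normSq w / (1 - normSq w)
        = Dd (((1:G) : Equiv.Perm {z : ℂ // ‖z‖ < 1}) z0 : ℂ) w := h1.symm
      _ ≤ E w := Finset.single_le_sum (fun ρ _ => Dd_nonneg (horb ρ) hw) (Finset.mem_univ 1)
  have hinv : ∀ σ (hσ : σ ∈ G) (x : {z : ℂ // ‖z‖ < 1}),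
      E (σ x : ℂ) = E (x : ℂ) := by
    intro σ hσ x
    set σG : G := ⟨σ, hσ⟩ with hσG
    have step : ∀ ρ : G, Dd ((ρ : Equiv.Perm {z : ℂ // ‖z‖ < 1}) z0 : ℂ) (σ x : ℂ)
        = Dd (((σG⁻¹ * ρ : G) : Equiv.Perm {z : ℂ // ‖z‖ < 1}) z0 : ℂ) (x : ℂ) := by
      intro ρ
      have key : (ρ : Equiv.Perm {z : ℂ // ‖z‖ < 1}) z0 = σ (((σG⁻¹ * ρ : G) : Equiv.Perm {z : ℂ // ‖z‖ < 1}) z0) := by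
        simp [hσG, Equiv.Perm.mul_apply]
      rw [key, hiso σ hσ]
    calc E (σ x : ℂ) = ∑ ρ : G, Dd (((σG⁻¹ * ρ : G) : Equiv.Perm {z : ℂ // ‖z‖ < 1}) z0 : ℂ) (x : ℂ) :=
          Finset.sum_congr rfl fun ρ _ => step ρ
      _ = ∑ τ : G, Dd ((τ : Equiv.Perm {z : ℂ // ‖z‖ < 1}) z0 : ℂ) (x : ℂ) :=
          Fintype.sum_equiv (Equiv.mulLeft σG⁻¹) _ _ (fun ρ => rfl)
      _ = E (x : ℂ) := rfl
  -- compact sublevel set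
  set c : ℝ := M / (M + 1) with hc
  have hc0 : 0 ≤ c := div_nonneg hMnn (by linarith)
  have hc1 : c < 1 := by
    rw [hc, div_lt_one (by linarith)]
    linarith
  set K : Set ℂ := {w : ℂ | normSq w ≤ c} with hK
  have hKc : IsCompact K := by
    have hcl : IsClosed K := isClosed_le Complex.continuous_normSq continuous_const
    have hbd : Bornology.IsBounded K := by
      apply (Metric.isBounded_closedBall (x := (0:ℂ)) (r := 1)).subset
      intro w hw
      have h1 : normSq w ≤ c := hw
      rw [Metric.mem_closedBall, dist_zero_right]
      have h2 : ‖w‖ ^ 2 ≤ 1 := by rw [Complex.sq_norm]; linarith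
      nlinarith [norm_nonneg w]
    exact Metric.isCompact_of_isClosed_isBounded hcl hbd
  have hKsub : ∀ w ∈ K, normSq w < 1 := fun w hw => lt_of_le_of_lt hw hc1
  have hEc : ContinuousOn E K := by
    apply continuousOn_finset_sum
    intro ρ _
    apply ContinuousOn.div
    · exact ((Complex.continuous_normSq).comp (continuous_id.sub continuous_const)).continuousOn
    · exact (continuous_const.mul ((continuous_const.sub Complex.continuous_normSq))).continuousOn
    · intro w hw
      have h1 : 0 < 1 - normSq ((ρ : Equiv.Perm {z : ℂ // ‖z‖ < 1}) z0 : ℂ) := by have := horb ρ; linarith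
      have h2 : 0 < 1 - normSq w := by have := hKsub w hw; linarith
      positivity
  have hK0 : (0:ℂ) ∈ K := by simp [hK, hc0]
  obtain ⟨α, hαK, hαmin⟩ := hKc.exists_isMinOn ⟨0, hK0⟩ hEc
  have hα1 : normSq α < 1 := hKsub α hαK
  have hglobal : ∀ w : ℂ, normSq w < 1 → E α ≤ E w := by
    intro w hw
    by_cases hwK : w ∈ K
    · exact hαmin hwK
    · have hwc : c < normSq w := lt_of_not_ge fun h => hwK h
      have hMlt : M < normSq w / (1 - normSq w) := by
        rw [lt_div_iff₀ (by linarith)]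
        have h' : M < normSq w * (M + 1) := by
          rw [hc, div_lt_iff₀ (by linarith)] at hwc
          linarith
        nlinarith
      have := hEid w hw
      have hE0 : E α ≤ M := hαmin hK0
      linarith
  -- α is the unique minimizer; it is fixed by G
  refine ⟨⟨α, (absn α).2 hα1⟩, ?_⟩
  intro σ hσ
  by_contra hne
  set αd : {z : ℂ // ‖z‖ < 1} := ⟨α, (absn α).2 hα1⟩ with hαd
  have hβ1 : normSq (σ αd : ℂ) < 1 := (absn _).1 (σ αd).2
  have hneC : α ≠ (σ αd : ℂ) := by
    intro h
    apply hne
    exact Subtype.ext h.symm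
  set m : ℂ := (α + (σ αd : ℂ)) / 2 with hm
  have hm1 : normSq m < 1 := by
    rw [hm, parallelogram]
    have := normSq_nonneg ((α - (σ αd : ℂ))/2)
    linarith
  have hconv : E m < (E α + E (σ αd : ℂ)) / 2 := by
    have key : ∀ ρ : G, Dd ((ρ : Equiv.Perm {z : ℂ // ‖z‖ < 1}) z0 : ℂ) m < (Dd ((ρ : Equiv.Perm {z : ℂ // ‖z‖ < 1}) z0 : ℂ) α + Dd ((ρ : Equiv.Perm {z : ℂ // ‖z‖ < 1}) z0 : ℂ) (σ αd : ℂ)) / 2 := by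
      intro ρ
      rw [hm]
      exact Dd_mid_strict (horb ρ) hα1 hβ1 hneC
    calc E m = ∑ ρ : G, Dd ((ρ : Equiv.Perm {z : ℂ // ‖z‖ < 1}) z0 : ℂ) m := rfl
      _ < ∑ ρ : G, (Dd ((ρ : Equiv.Perm {z : ℂ // ‖z‖ < 1}) z0 : ℂ) α + Dd ((ρ : Equiv.Perm {z : ℂ // ‖z‖ < 1}) z0 : ℂ) (σ αd : ℂ)) / 2 :=
          Finset.sum_lt_sum_of_nonempty Finset.univ_nonempty (fun ρ _ => key ρ)
      _ = (E α + E (σ αd : ℂ)) / 2 := by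
          rw [← Finset.sum_div, Finset.sum_add_distrib]
  have hEβ : E (σ αd : ℂ) = E α := hinv σ hσ αd
  have hEm : E α ≤ E m := hglobal m hm1
  rw [hEβ] at hconv
  linarith
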